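/- Minimum communication cost under an omniscient adversary (cost part of Theorem 2): let S and downloads Y_1, …, Y_d be random variables on a common probability space taking values in finite sets, let z_ro, z_wo, z_rw ≥ 0 and k ≤ d be integers with d > 3z_rw + 2z_wo + z_ro, set z_r = z_ro + z_rw and z_w = z_wo + z_rw, and let α, β ≥ 0 be reals. Suppose H(Y_i) ≤ β for every i, H(S | Y_Z) = H(S) for every Z ⊆ {1,…,d} with |Z| = z_r, H(S | Y_B) = 0 for every B ⊆ {1,…,d} with |B| = d − 2z_w, and H(S) = (k − 3z_rw − 2z_wo − z_ro)·α. Then the total download satisfies d·β ≥ d·(k − 3z_rw − 2z_wo − z_ro)·α / (d − 3z_rw − 2z_wo − z_ro). -/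

import Mathlib

open Finset

/-- The probability that the random variable `X` takes the value `a`, under the
probability mass function `p` on the finite sample space `Ω`. -/
noncomputable def probOf {Ω : Type*} [Fintype Ω] (p : Ω → ℝ) {A : Type*} [DecidableEq A]
    (X : Ω → A) (a : A) : ℝ :=
  ∑ ω ∈ Finset.univ.filter fun ω => X ω = a, p ω

/-- Shannon entropy of the random variable `X` with logarithm base `b`. -/
noncomputable def entropy {Ω : Type*} [Fintype Ω] (b : ℝ) (p : Ω → ℝ) {A : Type*}
    [Fintype A] [DecidableEq A] (X : Ω → A) : ℝ :=
  -∑ a : A, probOf p X a * Real.logb b (probOf p X a)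

/-- Conditional Shannon entropy `H(X | Y)` with logarithm base `b`,
defined by the chain rule `H(X | Y) = H(X, Y) - H(Y)`. -/
noncomputable def condEntropy {Ω : Type*} [Fintype Ω] (b : ℝ) (p : Ω → ℝ) {A B : Type*}
    [Fintype A] [DecidableEq A] [Fintype B] [DecidableEq B] (X : Ω → A) (Y : Ω → B) : ℝ :=
  entropy b p (fun ω => (X ω, Y ω)) - entropy b p Y

/-- The tuple `X_A = (X_i)_{i ∈ A}` of a family of random variables. -/
def tupleOn {Ω : Type*} {N : ℕ} {V : Fin N → Type*} (X : ∀ i, Ω → V i) (A : Finset (Fin N)) :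
    Ω → ∀ i : A, V i :=
  fun ω i => X i ω

section helpers
variable {Ω : Type*} [Fintype Ω] {b : ℝ} {p : Ω → ℝ}

lemma probOf_nonneg (hp : ∀ ω, 0 ≤ p ω) {A : Type*} [DecidableEq A] (X : Ω → A) (a : A) :
    0 ≤ probOf p X a :=
  Finset.sum_nonneg fun ω _ => hp ω

lemma sum_probOf (hp1 : ∑ ω, p ω = 1) {A : Type*} [Fintype A] [DecidableEq A] (X : Ω → A) :
    ∑ a, probOf p X a = 1 := by
  rw [← hp1]; exact Finset.sum_fiberwise _ _ _

lemma probOf_comp {A C : Type*} [Fintype A] [DecidableEq A] [DecidableEq C]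
    (X : Ω → A) (f : A → C) (c : C) :
    probOf p (fun ω => f (X ω)) c = ∑ a ∈ Finset.univ.filter fun a => f a = c, probOf p X a := by
  unfold probOf
  rw [Finset.sum_fiberwise_eq_sum_filter]
  simp

/-- Data processing: entropy of a function of `X` is at most entropy of `X`. -/
lemma entropy_comp_le (hb : 1 < b) (hp : ∀ ω, 0 ≤ p ω)
    {A C : Type*} [Fintype A] [DecidableEq A] [Fintype C] [DecidableEq C]
    (X : Ω → A) (f : A → C) :
    entropy b p (fun ω => f (X ω)) ≤ entropy b p X := by
  unfold entropy
  rw [neg_le_neg_iff]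
  calc ∑ a, probOf p X a * Real.logb b (probOf p X a)
      ≤ ∑ a, probOf p X a * Real.logb b (probOf p (fun ω => f (X ω)) (f a)) := by
        apply Finset.sum_le_sum
        intro a _
        rcases eq_or_lt_of_le (probOf_nonneg hp X a) with h | h
        · rw [← h]; simp
        · refine mul_le_mul_of_nonneg_left ?_ h.le
          refine Real.logb_le_logb_of_le hb h ?_
          rw [probOf_comp X f (f a)]
          exact Finset.single_le_sum (fun a' _ => probOf_nonneg hp X a') (by simp)
    _ = ∑ c, probOf p (fun ω => f (X ω)) c * Real.logb b (probOf p (fun ω => f (X ω)) c) := by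
        rw [← Finset.sum_fiberwise Finset.univ (fun a => f a)
          (fun a => probOf p X a * Real.logb b (probOf p (fun ω => f (X ω)) (f a)))]
        refine Finset.sum_congr rfl fun c _ => ?_
        have hcong : ∀ a ∈ Finset.univ.filter fun a => f a = c,
            probOf p X a * Real.logb b (probOf p (fun ω => f (X ω)) (f a))
              = probOf p X a * Real.logb b (probOf p (fun ω => f (X ω)) c) :=
          fun a ha => by rw [(Finset.mem_filter.mp ha).2]
        rw [Finset.sum_congr rfl hcong, ← Finset.sum_mul, ← probOf_comp X f c]

/-- Gibbs-type inequality. -/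
lemma gibbs (hb : 1 < b) {ι : Type*} [Fintype ι] (r q : ι → ℝ)
    (hr : ∀ i, 0 ≤ r i) (hq : ∀ i, 0 ≤ q i) (hrq : ∀ i, 0 < r i → 0 < q i)
    (h1 : ∑ i, r i = 1) (h2 : ∑ i, q i ≤ 1) :
    ∑ i, r i * Real.logb b (q i) ≤ ∑ i, r i * Real.logb b (r i) := by
  have hlb : 0 < Real.log b := Real.log_pos hb
  have key : ∀ i, r i * Real.logb b (q i) - r i * Real.logb b (r i) ≤ (q i - r i) / Real.log b := by
    intro i
    rcases eq_or_lt_of_le (hr i) with h | h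
    · rw [← h]
      simp only [zero_mul, sub_zero, sub_self]
      exact div_nonneg (hq i) (Real.log_pos hb).le
    · have hqi := hrq i h
      have hdiv : 0 < q i / r i := div_pos hqi h
      have : Real.logb b (q i) - Real.logb b (r i) = Real.log (q i / r i) / Real.log b := by
        rw [← Real.logb_div hqi.ne' h.ne']
        simp [Real.logb]
      calc r i * Real.logb b (q i) - r i * Real.logb b (r i)
          = r i * (Real.log (q i / r i) / Real.log b) := by rw [← mul_sub, this]
        _ ≤ r i * ((q i / r i - 1) / Real.log b) := by
            refine mul_le_mul_of_nonneg_left ?_ h.le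
            gcongr
            exact Real.log_le_sub_one_of_pos hdiv
        _ = (q i - r i) / Real.log b := by field_simp
  have := Finset.sum_le_sum (fun i (_ : i ∈ Finset.univ) => key i)
  rw [Finset.sum_sub_distrib] at this
  have h3 : ∑ i, (q i - r i) / Real.log b ≤ 0 := by
    rw [← Finset.sum_div, Finset.sum_sub_distrib, h1]
    apply div_nonpos_of_nonpos_of_nonneg _ hlb.le
    linarith
  linarith

lemma probOf_pair_fst {A B : Type*} [Fintype A] [DecidableEq A] [Fintype B] [DecidableEq B]
    (X : Ω → A) (Y : Ω → B) (x : A) :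
    ∑ y, probOf p (fun ω => (X ω, Y ω)) (x, y) = probOf p X x := by
  unfold probOf
  simp only [Finset.sum_filter]
  rw [Finset.sum_comm]
  refine Finset.sum_congr rfl fun ω _ => ?_
  by_cases h : X ω = x
  · simp [Prod.ext_iff, h]
  · simp [Prod.ext_iff, h]

lemma probOf_pair_snd {A B : Type*} [Fintype A] [DecidableEq A] [Fintype B] [DecidableEq B]
    (X : Ω → A) (Y : Ω → B) (y : B) :
    ∑ x, probOf p (fun ω => (X ω, Y ω)) (x, y) = probOf p Y y := by
  unfold probOf
  simp only [Finset.sum_filter]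
  rw [Finset.sum_comm]
  refine Finset.sum_congr rfl fun ω _ => ?_
  by_cases h : Y ω = y
  · simp [Prod.ext_iff, h]
  · simp [Prod.ext_iff, h]

/-- Subadditivity of entropy for a pair. -/
lemma entropy_pair_le (hb : 1 < b) (hp : ∀ ω, 0 ≤ p ω) (hp1 : ∑ ω, p ω = 1)
    {A B : Type*} [Fintype A] [DecidableEq A] [Fintype B] [DecidableEq B]
    (X : Ω → A) (Y : Ω → B) :
    entropy b p (fun ω => (X ω, Y ω)) ≤ entropy b p X + entropy b p Y := by
  set r := probOf p (fun ω => (X ω, Y ω)) with hrdef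
  have hr : ∀ z : A × B, 0 ≤ r z := fun z => probOf_nonneg hp _ z
  have hle1 : ∀ z : A × B, r z ≤ probOf p X z.1 := by
    rintro ⟨x, y⟩
    rw [← probOf_pair_fst X Y x]
    exact Finset.single_le_sum (fun y' _ => hr (x, y')) (Finset.mem_univ y)
  have hle2 : ∀ z : A × B, r z ≤ probOf p Y z.2 := by
    rintro ⟨x, y⟩
    rw [← probOf_pair_snd X Y y]
    exact Finset.single_le_sum (fun x' _ => hr (x', y)) (Finset.mem_univ x)
  have hg := gibbs hb (ι := A × B) r
      (fun z => probOf p X z.1 * probOf p Y z.2)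
      hr (fun z => mul_nonneg (probOf_nonneg hp _ _) (probOf_nonneg hp _ _))
      (fun z hz => mul_pos (lt_of_lt_of_le hz (hle1 z)) (lt_of_lt_of_le hz (hle2 z)))
      (sum_probOf hp1 _)
      (by
        rw [Fintype.sum_prod_type]
        simp only [← Finset.mul_sum]
        rw [← Finset.sum_mul, sum_probOf hp1 X, sum_probOf hp1 Y, one_mul])
  have hsplit : ∑ z : A × B, r z * Real.logb b (probOf p X z.1 * probOf p Y z.2)
      = ∑ z : A × B, r z * Real.logb b (probOf p X z.1)
        + ∑ z : A × B, r z * Real.logb b (probOf p Y z.2) := by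
    rw [← Finset.sum_add_distrib]
    refine Finset.sum_congr rfl fun z _ => ?_
    rcases eq_or_lt_of_le (hr z) with h | h
    · rw [← h]; ring
    · rw [Real.logb_mul (lt_of_lt_of_le h (hle1 z)).ne' (lt_of_lt_of_le h (hle2 z)).ne']
      ring
  have hm1 : ∑ z : A × B, r z * Real.logb b (probOf p X z.1)
      = ∑ x, probOf p X x * Real.logb b (probOf p X x) := by
    rw [Fintype.sum_prod_type]
    refine Finset.sum_congr rfl fun x _ => ?_
    dsimp only
    rw [← Finset.sum_mul, probOf_pair_fst X Y x]
  have hm2 : ∑ z : A × B, r z * Real.logb b (probOf p Y z.2)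
      = ∑ y, probOf p Y y * Real.logb b (probOf p Y y) := by
    rw [Fintype.sum_prod_type, Finset.sum_comm]
    refine Finset.sum_congr rfl fun y _ => ?_
    dsimp only
    rw [← Finset.sum_mul, probOf_pair_snd X Y y]
  unfold entropy
  rw [← hrdef]
  rw [hsplit, hm1, hm2] at hg
  linarith

lemma entropy_of_subsingleton (hp1 : ∑ ω, p ω = 1) {A : Type*} [Fintype A] [DecidableEq A]
    [Subsingleton A] (X : Ω → A) : entropy b p X = 0 := by
  unfold entropy probOf
  have h : ∀ a : A, (Finset.univ.filter fun ω => X ω = a) = Finset.univ := fun a => by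
    ext ω; simp [Subsingleton.elim (X ω) a]
  simp [h, hp1]

/-- Subadditivity of entropy for tuples. -/
lemma entropy_tupleOn_le (hb : 1 < b) (hp : ∀ ω, 0 ≤ p ω) (hp1 : ∑ ω, p ω = 1)
    {d : ℕ} {V : Fin d → Type*} [∀ i, Fintype (V i)] [∀ i, DecidableEq (V i)]
    (Y : ∀ i, Ω → V i) (A : Finset (Fin d)) :
    entropy b p (tupleOn Y A) ≤ ∑ i ∈ A, entropy b p (Y i) := by
  induction A using Finset.cons_induction with
  | empty =>
      rw [Finset.sum_empty, entropy_of_subsingleton hp1]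
  | cons a s ha ih =>
      rw [Finset.sum_cons]
      set g : V a × (∀ i : s, V i) → ∀ i : (Finset.cons a s ha), V i :=
        fun z i => if h : (i : Fin d) = a then cast (congrArg V h).symm z.1
          else z.2 ⟨i, (Finset.mem_cons.mp i.2).resolve_left h⟩ with hg
      have heq : tupleOn Y (Finset.cons a s ha) = fun ω => g (Y a ω, tupleOn Y s ω) := by
        funext ω
        funext i
        obtain ⟨j, hj⟩ := i
        rw [hg]
        dsimp [tupleOn]
        split_ifs with h
        · subst h; simp
        · rfl
      calc entropy b p (tupleOn Y (Finset.cons a s ha))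
          = entropy b p (fun ω => g ((Y a ω, tupleOn Y s ω))) := by rw [heq]
        _ ≤ entropy b p (fun ω => (Y a ω, tupleOn Y s ω)) :=
            entropy_comp_le hb hp (fun ω => (Y a ω, tupleOn Y s ω)) g
        _ ≤ entropy b p (Y a) + entropy b p (tupleOn Y s) := entropy_pair_le hb hp hp1 _ _
        _ ≤ entropy b p (Y a) + ∑ i ∈ s, entropy b p (Y i) := by linarith

end helpers

/-- Minimum communication cost under an omniscient adversary (cost part of
Theorem 2): if each download `Y_i` has entropy at most `β`, any `z_r` downloads
are independent of the secret, the user can decode from any `d - 2z_w`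
downloads, and the secret has the capacity-achieving size
`(k - 3z_rw - 2z_wo - z_ro)·α`, then
`d·β ≥ d·(k - 3z_rw - 2z_wo - z_ro)·α / (d - 3z_rw - 2z_wo - z_ro)`. -/
theorem omniscient_min_communication_cost
    {Ω : Type*} [Fintype Ω] (b : ℝ) (hb : 1 < b)
    (p : Ω → ℝ) (hp : ∀ ω, 0 ≤ p ω) (hp1 : ∑ ω, p ω = 1)
    {σ : Type*} [Fintype σ] [DecidableEq σ] (S : Ω → σ)
    (d k zro zwo zrw : ℕ) (hkd : k ≤ d) (hd : 3 * zrw + 2 * zwo + zro < d)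
    {V : Fin d → Type*} [∀ i, Fintype (V i)] [∀ i, DecidableEq (V i)]
    (Y : ∀ i, Ω → V i)
    (α β : ℝ) (hα : 0 ≤ α) (hβ : 0 ≤ β)
    (hdl : ∀ i, entropy b p (Y i) ≤ β)
    (hpriv : ∀ Z : Finset (Fin d), Z.card = zro + zrw →
      condEntropy b p S (tupleOn Y Z) = entropy b p S)
    (hdec : ∀ B : Finset (Fin d), B.card = d - 2 * (zwo + zrw) →
      condEntropy b p S (tupleOn Y B) = 0)
    (hS : entropy b p S = ((k : ℝ) - 3 * (zrw : ℝ) - 2 * (zwo : ℝ) - (zro : ℝ)) * α) :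
    (d : ℝ) * β ≥
      (d : ℝ) * (((k : ℝ) - 3 * (zrw : ℝ) - 2 * (zwo : ℝ) - (zro : ℝ)) * α) /
        ((d : ℝ) - 3 * (zrw : ℝ) - 2 * (zwo : ℝ) - (zro : ℝ)) := by
  -- choose a decoding set B and a privacy set Z ⊆ B
  obtain ⟨B, -, hBcard⟩ := Finset.exists_subset_card_eq (s := (Finset.univ : Finset (Fin d)))
    (n := d - 2 * (zwo + zrw)) (by simp)
  obtain ⟨Z, hZB, hZcard⟩ := Finset.exists_subset_card_eq (s := B) (n := zro + zrw)
    (by rw [hBcard]; omega)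
  -- H(S, Y_Z) = H(S) + H(Y_Z)
  have e1 : entropy b p (fun ω => (S ω, tupleOn Y Z ω))
      = entropy b p S + entropy b p (tupleOn Y Z) := by
    have h := hpriv Z hZcard
    unfold condEntropy at h
    linarith
  -- H(S, Y_Z) ≤ H(S, Y_B)
  have e2 : entropy b p (fun ω => (S ω, tupleOn Y Z ω))
      ≤ entropy b p (fun ω => (S ω, tupleOn Y B ω)) := by
    have := entropy_comp_le (p := p) hb hp (fun ω => (S ω, tupleOn Y B ω))
      (fun z => (z.1, fun i : Z => z.2 ⟨i.1, hZB i.2⟩))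
    exact this
  -- H(S, Y_B) = H(Y_B)
  have e3 : entropy b p (fun ω => (S ω, tupleOn Y B ω)) = entropy b p (tupleOn Y B) := by
    have h := hdec B hBcard
    unfold condEntropy at h
    linarith
  -- H(Y_B) ≤ H(Y_Z) + H(Y_{B \ Z})
  have e4 : entropy b p (tupleOn Y B)
      ≤ entropy b p (tupleOn Y Z) + entropy b p (tupleOn Y (B \ Z)) := by
    set c : (∀ i : Z, V i) × (∀ i : (B \ Z : Finset (Fin d)), V i) → ∀ i : B, V i :=
      fun z i => if h : i.1 ∈ Z then z.1 ⟨i.1, h⟩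
        else z.2 ⟨i.1, Finset.mem_sdiff.mpr ⟨i.2, h⟩⟩ with hc
    have heq : tupleOn Y B = fun ω => c (tupleOn Y Z ω, tupleOn Y (B \ Z) ω) := by
      funext ω
      funext i
      rw [hc]
      dsimp [tupleOn]
      split_ifs <;> rfl
    calc entropy b p (tupleOn Y B)
        = entropy b p (fun ω => c ((tupleOn Y Z ω, tupleOn Y (B \ Z) ω))) := by rw [heq]
      _ ≤ entropy b p (fun ω => (tupleOn Y Z ω, tupleOn Y (B \ Z) ω)) :=
          entropy_comp_le hb hp _ c
      _ ≤ _ := entropy_pair_le hb hp hp1 _ _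
  -- H(Y_{B \ Z}) ≤ |B \ Z| β
  have e5 : entropy b p (tupleOn Y (B \ Z)) ≤ ((B \ Z).card : ℝ) * β := by
    calc entropy b p (tupleOn Y (B \ Z)) ≤ ∑ i ∈ B \ Z, entropy b p (Y i) :=
          entropy_tupleOn_le hb hp hp1 Y _
      _ ≤ (B \ Z).card • β := Finset.sum_le_card_nsmul _ _ β fun i _ => hdl i
      _ = ((B \ Z).card : ℝ) * β := by rw [nsmul_eq_mul]
  -- cardinality computation
  have hcard : ((B \ Z).card : ℝ)
      = (d : ℝ) - 3 * (zrw : ℝ) - 2 * (zwo : ℝ) - (zro : ℝ) := by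
    have h : (B \ Z).card + (3 * zrw + 2 * zwo + zro) = d := by
      rw [Finset.card_sdiff_of_subset hZB, hBcard, hZcard]; omega
    have := congrArg (Nat.cast : ℕ → ℝ) h
    push_cast at this
    linarith
  set K : ℝ := (k : ℝ) - 3 * (zrw : ℝ) - 2 * (zwo : ℝ) - (zro : ℝ) with hK
  set D : ℝ := (d : ℝ) - 3 * (zrw : ℝ) - 2 * (zwo : ℝ) - (zro : ℝ) with hD
  have hDpos : 0 < D := by
    rw [hD]
    have : (3 * zrw + 2 * zwo + zro : ℝ) < (d : ℝ) := by exact_mod_cast hd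
    linarith
  have hKD : K * α ≤ D * β := by
    rw [← hS, ← hcard]
    linarith
  rw [ge_iff_le, div_le_iff₀ hDpos]
  calc (d : ℝ) * (K * α) ≤ (d : ℝ) * (D * β) :=
        mul_le_mul_of_nonneg_left hKD (Nat.cast_nonneg d)
    _ = (d : ℝ) * β * D := by ring
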